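/- Let φ : ℝ → ℝ be differentiable on (0,∞) with 0 < v·φ'(v) ≤ φ(v) for every v > 0, and let u, u*, v, v* > 0. Then φ(v)/φ(v*) - v/v* - (u·φ(v)·v*)/(u*·φ(v*)·v) - u*/u + 2 ≤ 0, with equality when u = u* and v = v*. -/
import Mathlib

/-- Algebraic core: if `A, B, x > 0` and `(A-1)(B-A) ≥ 0`, then
`A - B - x A / B - 1/x + 2 ≤ 0`. -/
lemma key_alg (A B x : ℝ) (hA : 0 < A) (hB : 0 < B) (hx : 0 < x)
    (h : 0 ≤ (A - 1) * (B - A)) :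
    A - B - x * A / B - 1 / x + 2 ≤ 0 := by
  have hG : 0 ≤ A * x ^ 2 + B * (B - A - 2) * x + B := by
    rcases le_or_gt 0 (B * (B - A - 2)) with hb | hb
    · nlinarith [mul_pos hA (mul_pos hx hx), mul_nonneg hb hx.le]
    · have hd : B - A < 2 := by nlinarith
      have h4 : (0:ℝ) ≤ 4 - (B - A) := by linarith
      have h3 : (0:ℝ) ≤ 3 - (B - A) := by linarith
      nlinarith [sq_nonneg (2 * A * x + B * (B - A - 2)),
        mul_nonneg hB.le (mul_nonneg h h4),
        mul_nonneg hB.le (mul_nonneg (sq_nonneg (B - A)) h3)]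
  have hxB : 0 < x * B := mul_pos hx hB
  have heq : A - B - x * A / B - 1 / x + 2
      = -((A * x ^ 2 + B * (B - A - 2) * x + B) / (x * B)) := by
    field_simp
    ring
  rw [heq]
  exact neg_nonpos.mpr (div_nonneg hG hxB.le)

theorem stmt_17 (φ : ℝ → ℝ)
    (hdiff : ∀ w ∈ Set.Ioi (0:ℝ), DifferentiableAt ℝ φ w)
    (hinc : ∀ w : ℝ, 0 < w → 0 < w * deriv φ w ∧ w * deriv φ w ≤ φ w)
    (u ustar v vstar : ℝ)
    (hu : 0 < u) (hustar : 0 < ustar) (hv : 0 < v) (hvstar : 0 < vstar) :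
    φ v / φ vstar - v / vstar - u * φ v * vstar / (ustar * φ vstar * v) - ustar / u + 2 ≤ 0 ∧
    (u = ustar → v = vstar →
      φ v / φ vstar - v / vstar - u * φ v * vstar / (ustar * φ vstar * v) - ustar / u + 2
        = 0) := by
  -- positivity of φ on (0,∞)
  have hφpos : ∀ w : ℝ, 0 < w → 0 < φ w := fun w hw =>
    lt_of_lt_of_le (hinc w hw).1 (hinc w hw).2
  -- φ is monotone on (0,∞)
  have hmono : MonotoneOn φ (Set.Ioi (0:ℝ)) := by
    apply monotoneOn_of_deriv_nonneg (convex_Ioi 0)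
    · exact fun w hw => (hdiff w hw).continuousAt.continuousWithinAt
    · intro w hw
      rw [interior_Ioi] at hw
      exact (hdiff w hw).differentiableWithinAt
    · intro w hw
      rw [interior_Ioi] at hw
      have hw0 : 0 < w := hw
      have := (hinc w hw0).1
      nlinarith
  -- φ(w)/w is antitone on (0,∞)
  have hanti : AntitoneOn (fun w => φ w / w) (Set.Ioi (0:ℝ)) := by
    have hd : ∀ w ∈ Set.Ioi (0:ℝ), HasDerivAt (fun w => φ w / w)
        ((deriv φ w * w - φ w * 1) / w ^ 2) w := by
      intro w hw
      exact ((hdiff w hw).hasDerivAt).div (hasDerivAt_id w) (ne_of_gt hw)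
    apply antitoneOn_of_deriv_nonpos (convex_Ioi 0)
    · exact fun w hw => ((hd w hw).differentiableAt).continuousAt.continuousWithinAt
    · intro w hw
      rw [interior_Ioi] at hw
      exact ((hd w hw).differentiableAt).differentiableWithinAt
    · intro w hw
      rw [interior_Ioi] at hw
      rw [(hd w hw).deriv]
      apply div_nonpos_of_nonpos_of_nonneg
      · have := (hinc w hw).2
        nlinarith
      · positivity
  have hφv := hφpos v hv
  have hφvs := hφpos vstar hvstar
  set A := φ v / φ vstar with hAdef
  set B := v / vstar with hBdef
  set x := u / ustar with hxdef
  have hA : 0 < A := div_pos hφv hφvs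
  have hB : 0 < B := div_pos hv hvstar
  have hx : 0 < x := div_pos hu hustar
  -- the key sign condition
  have hkey : 0 ≤ (A - 1) * (B - A) := by
    rcases le_total v vstar with hvv | hvv
    · have h1 : φ v ≤ φ vstar := hmono hv hvstar hvv
      have h2 : φ vstar / vstar ≤ φ v / v := hanti hv hvstar hvv
      have hA1 : A ≤ 1 := (div_le_one hφvs).mpr h1
      have hBA : B ≤ A := by
        rw [hAdef, hBdef, div_le_div_iff₀ hvstar hφvs]
        rw [div_le_div_iff₀ hvstar hv] at h2
        nlinarith
      nlinarith
    · have h1 : φ vstar ≤ φ v := hmono hvstar hv hvv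
      have h2 : φ v / v ≤ φ vstar / vstar := hanti hvstar hv hvv
      have hA1 : 1 ≤ A := (one_le_div hφvs).mpr h1
      have hBA : A ≤ B := by
        rw [hAdef, hBdef, div_le_div_iff₀ hφvs hvstar]
        rw [div_le_div_iff₀ hv hvstar] at h2
        nlinarith
      nlinarith
  have hmain := key_alg A B x hA hB hx hkey
  have heq : φ v / φ vstar - v / vstar - u * φ v * vstar / (ustar * φ vstar * v) - ustar / u + 2
      = A - B - x * A / B - 1 / x + 2 := by
    rw [hAdef, hBdef, hxdef]
    field_simp
  constructor
  · rw [heq]; exact hmain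
  · intro huu hvv
    subst huu hvv
    have h1 : φ v / φ v = 1 := div_self (ne_of_gt hφv)
    have h2 : v / v = 1 := div_self (ne_of_gt hv)
    have h3 : u * φ v * v / (u * φ v * v) = 1 := div_self (by positivity)
    have h4 : u / u = 1 := div_self (ne_of_gt hu)
    rw [hAdef, hBdef, h1, h2, h3, h4]
    ring
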